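/- Let n ≥ 2 and define μ(n,k) = (n-k+1)∏_{j=1}^{k-1}(n-j) for 1 ≤ k ≤ n-1. Then for every real a with 0 < a ≤ min_{1 ≤ k ≤ n-1} 2/√(μ(n,k)), the polynomial p_a(x) = 1 + x + ⋯ + x^{n-1} - a x^n + x^{n+1} + ⋯ + x^{2n} belongs to 𝒫_n, i.e., p_a(A) is entrywise nonnegative for every entrywise nonnegative n×n real matrix A. -/

import Mathlib

open Finset



/-- `𝒫 n`: real polynomials mapping entrywise nonnegative `n × n` matrices to
entrywise nonnegative matrices. -/
def polyPreservesNonneg (n : ℕ) : Set (Polynomial ℝ) :=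
  {p | ∀ A : Matrix (Fin n) (Fin n) ℝ, (∀ i j, 0 ≤ A i j) →
    ∀ i j, 0 ≤ (Polynomial.aeval A) p i j}

/-- `μ(n,k) = (n-k+1)·∏_{j=1}^{k-1}(n-j)`. -/
def muBound (n k : ℕ) : ℕ := (n - k + 1) * ∏ j ∈ Finset.Icc 1 (k - 1), (n - j)

/-- The polynomial `p_a(x) = 1 + x + ⋯ + x^{n-1} - a xⁿ + x^{n+1} + ⋯ + x^{2n}`. -/
noncomputable def pPoly (n : ℕ) (a : ℝ) : Polynomial ℝ :=
  ∑ j ∈ Finset.range (2 * n + 1),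
    Polynomial.C (if j = n then -a else 1) * Polynomial.X ^ j


namespace PPaux

variable {n : ℕ}

/-- `v` has a duplicate value at position `t`. -/
def hasDup (v : ℕ → Fin n) (t : ℕ) : Prop := ∃ s, s < t ∧ v s = v t

instance (v : ℕ → Fin n) : DecidablePred (hasDup v) := fun t => by
  unfold hasDup; infer_instance

lemma exists_dup (v : ℕ → Fin n) : ∃ t, hasDup v t ∧ t ≤ n := by
  have hn : 0 < n := (v 0).pos
  obtain ⟨x, y, hxy, h⟩ := Fintype.exists_ne_map_eq_of_card_lt
    (fun i : Fin (n+1) => v i) (by simp)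
  rcases lt_or_gt_of_ne hxy with hlt | hlt
  · exact ⟨y, ⟨x, by exact_mod_cast hlt, h⟩, Nat.lt_succ_iff.mp y.isLt⟩
  · exact ⟨x, ⟨y, by exact_mod_cast hlt, h.symm⟩, Nat.lt_succ_iff.mp x.isLt⟩

lemma exists_dup' (v : ℕ → Fin n) : ∃ t, hasDup v t :=
  (exists_dup v).imp fun _ h => h.1

/-- Index of the first repeated vertex. -/
def tIdx (v : ℕ → Fin n) : ℕ := Nat.find (exists_dup' v)

lemma tIdx_spec (v : ℕ → Fin n) : hasDup v (tIdx v) := Nat.find_spec (exists_dup' v)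

lemma tIdx_le (v : ℕ → Fin n) : tIdx v ≤ n := by
  obtain ⟨t, ht, htn⟩ := exists_dup v
  exact le_trans (Nat.find_min' _ ht) htn

lemma not_hasDup_of_lt_tIdx {v : ℕ → Fin n} {t : ℕ} (h : t < tIdx v) : ¬ hasDup v t :=
  Nat.find_min _ h

/-- Its earlier partner. -/
def sIdx (v : ℕ → Fin n) : ℕ := Nat.find (tIdx_spec v)

lemma sIdx_lt_tIdx (v : ℕ → Fin n) : sIdx v < tIdx v ∧ v (sIdx v) = v (tIdx v) :=
  Nat.find_spec (tIdx_spec v)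

lemma inj_below {v : ℕ → Fin n} {s t : ℕ} (hst : s < t) (ht : t < tIdx v) :
    v s ≠ v t := fun h => not_hasDup_of_lt_tIdx ht ⟨s, hst, h⟩

lemma inj_below' {v : ℕ → Fin n} {s t : ℕ} (hs : s < tIdx v) (ht : t < tIdx v)
    (h : v s = v t) : s = t := by
  rcases lt_trichotomy s t with hc | hc | hc
  · exact absurd h (inj_below hc ht)
  · exact hc
  · exact absurd h.symm (inj_below hc hs)

lemma partner_unique {v : ℕ → Fin n} {s : ℕ} (hs : s < tIdx v)
    (h : v s = v (tIdx v)) : s = sIdx v := by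
  obtain ⟨hst, hvv⟩ := sIdx_lt_tIdx v
  rcases lt_trichotomy s (sIdx v) with hc | hc | hc
  · exact absurd (⟨hs, h⟩ : s < tIdx v ∧ v s = v (tIdx v)) (Nat.find_min (tIdx_spec v) hc)
  · exact hc
  · exact absurd (hvv.trans h.symm) (inj_below hc hs)

lemma tIdx_congr {v w : ℕ → Fin n} {m : ℕ} (hvw : ∀ r ≤ m, v r = w r)
    (h : tIdx v ≤ m) : tIdx w = tIdx v ∧ sIdx w = sIdx v := by
  obtain ⟨hst, hvv⟩ := sIdx_lt_tIdx v
  have hsm : sIdx v ≤ m := le_trans (le_of_lt hst) h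
  have hdw : hasDup w (tIdx v) := ⟨sIdx v, hst, by
    rw [← hvw _ hsm, ← hvw _ h]; exact hvv⟩
  have h1 : tIdx w ≤ tIdx v := Nat.find_min' _ hdw
  have h2 : tIdx v ≤ tIdx w := by
    by_contra hc
    push_neg at hc
    obtain ⟨s, hs, hv⟩ := tIdx_spec w
    have hwm : tIdx w ≤ m := le_trans h1 h
    refine not_hasDup_of_lt_tIdx hc ⟨s, hs, ?_⟩
    rw [hvw _ (le_trans (le_of_lt hs) hwm), hvw _ hwm]; exact hv
  have ht : tIdx w = tIdx v := le_antisymm h1 h2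
  refine ⟨ht, ?_⟩
  obtain ⟨hst', hvv'⟩ := sIdx_lt_tIdx w
  have : v (sIdx w) = v (tIdx v) := by
    rw [hvw _ (le_trans (le_of_lt (ht ▸ hst')) h), ← ht, hvw _ (ht ▸ h)]
    exact hvv'
  exact (partner_unique (ht ▸ hst') this).symm ▸ rfl



def gap (v : ℕ → Fin n) : ℕ := tIdx v - sIdx v

def shortv (v : ℕ → Fin n) : ℕ → Fin n :=
  fun r => if r ≤ sIdx v then v r else v (r + gap v)

def longv (v : ℕ → Fin n) : ℕ → Fin n :=
  fun r => if r ≤ tIdx v then v r else v (r - gap v)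

def recov (g : ℕ → Fin n) : ℕ → Fin n :=
  fun r => if r ≤ tIdx g then g r else g (r + gap g)

lemma longv_eq_of_le {v : ℕ → Fin n} {r : ℕ} (h : r ≤ tIdx v) : longv v r = v r :=
  if_pos h

lemma tIdx_longv (v : ℕ → Fin n) : tIdx (longv v) = tIdx v ∧ sIdx (longv v) = sIdx v := by
  have := tIdx_congr (v := longv v) (w := v) (m := tIdx v)
    (fun r hr => longv_eq_of_le hr) ?_
  · exact ⟨this.1.symm, this.2.symm⟩
  · -- need tIdx (longv v) ≤ tIdx v
    have hd : hasDup (longv v) (tIdx v) := by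
      obtain ⟨hst, hvv⟩ := sIdx_lt_tIdx v
      exact ⟨sIdx v, hst, by
        rw [longv_eq_of_le (le_of_lt hst), longv_eq_of_le le_rfl]; exact hvv⟩
    exact Nat.find_min' _ hd

lemma recov_longv (v : ℕ → Fin n) : ∀ r, recov (longv v) r = v r := by
  intro r
  obtain ⟨ht, hs⟩ := tIdx_longv v
  have hgap : gap (longv v) = gap v := by unfold gap; rw [ht, hs]
  unfold recov
  rw [ht, hgap]
  by_cases h : r ≤ tIdx v
  · simp [h, longv_eq_of_le h]
  · rw [if_neg h]
    unfold longv
    have h1 : ¬ (r + gap v ≤ tIdx v) := by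
      push_neg at h ⊢; omega
    rw [if_neg h1, Nat.add_sub_cancel]



variable (A : Matrix (Fin n) (Fin n) ℝ)

/-- Weight of the length-`m` walk read off from `v`. -/
def wt (m : ℕ) (v : ℕ → Fin n) : ℝ := ∏ r ∈ Finset.range m, A (v r) (v (r+1))

/-- Extend a `Fin (m+1)`-indexed tuple to `ℕ` by clamping. -/
def ext (m : ℕ) (f : Fin (m+1) → Fin n) : ℕ → Fin n :=
  fun r => f ⟨min r m, by omega⟩

lemma ext_eq (m : ℕ) (f : Fin (m+1) → Fin n) (r : ℕ) (h : r ≤ m) :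
    ext m f r = f ⟨r, by omega⟩ := by
  simp [ext, Nat.min_eq_left h]

lemma wt_congr {m : ℕ} {v w : ℕ → Fin n} (h : ∀ r ≤ m, v r = w r) :
    wt A m v = wt A m w := by
  unfold wt
  refine Finset.prod_congr rfl fun r hr => ?_
  rw [Finset.mem_range] at hr
  rw [h r (by omega), h (r+1) (by omega)]

lemma wt_nonneg (hA : ∀ i j, 0 ≤ A i j) (m : ℕ) (v : ℕ → Fin n) : 0 ≤ wt A m v :=
  Finset.prod_nonneg fun _ _ => hA _ _

/-- Walk sum function. -/
def pw (m : ℕ) (i j : Fin n) : ℝ :=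
  ∑ f : Fin (m+1) → Fin n,
    if f 0 = i ∧ f (Fin.last m) = j then wt A m (ext m f) else 0

lemma wt_zero (v : ℕ → Fin n) : wt A 0 v = 1 := by simp [wt]

lemma wt_cons (m : ℕ) (k : Fin n) (g : Fin (m+1) → Fin n) :
    wt A (m+1) (ext (m+1) (Fin.cons k g)) = A k (g 0) * wt A m (ext m g) := by
  unfold wt
  have hrest : (∏ r ∈ Finset.range m,
      A (ext (m+1) (Fin.cons k g) (r+1)) (ext (m+1) (Fin.cons k g) (r+1+1)))
      = ∏ r ∈ Finset.range m, A (ext m g r) (ext m g (r+1)) := by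
    refine Finset.prod_congr rfl fun r hr => ?_
    rw [Finset.mem_range] at hr
    rw [ext_eq (m+1) (Fin.cons k g) (r+1) (by omega),
        ext_eq (m+1) (Fin.cons k g) (r+1+1) (by omega),
        ext_eq m g r (by omega), ext_eq m g (r+1) (by omega)]
    have h1 : (⟨r+1, by omega⟩ : Fin (m+2)) = Fin.succ ⟨r, by omega⟩ := rfl
    have h2 : (⟨r+1+1, by omega⟩ : Fin (m+2)) = Fin.succ ⟨r+1, by omega⟩ := rfl
    rw [h1, h2, Fin.cons_succ, Fin.cons_succ]
  have h0 : A (ext (m+1) (Fin.cons k g) 0) (ext (m+1) (Fin.cons k g) (0+1)) = A k (g 0) := by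
    rw [ext_eq (m+1) (Fin.cons k g) 0 (by omega), ext_eq (m+1) (Fin.cons k g) (0+1) (by omega)]
    have ha : (⟨0, by omega⟩ : Fin (m+2)) = 0 := rfl
    have hb : (⟨0+1, by omega⟩ : Fin (m+2)) = Fin.succ 0 := rfl
    rw [ha, hb, Fin.cons_zero, Fin.cons_succ]
  rw [Finset.prod_range_succ', hrest, h0, mul_comm (∏ r ∈ Finset.range m, A (ext m g r) (ext m g (r+1))) (A k (g 0))]

lemma pw_zero (i j : Fin n) : pw A 0 i j = (1 : Matrix (Fin n) (Fin n) ℝ) i j := by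
  unfold pw
  rw [Fintype.sum_equiv (Equiv.funUnique (Fin 1) (Fin n)) _
    (fun k => if k = i ∧ k = j then (1:ℝ) else 0) (fun f => ?_)]
  · by_cases hij : i = j
    · subst hij
      simp [Matrix.one_apply, and_self]
    · rw [Matrix.one_apply_ne hij, Finset.sum_eq_zero]
      intro k _
      rw [if_neg]
      rintro ⟨rfl, rfl⟩
      exact hij rfl
  · rw [wt_zero]
    have h1 : f (Fin.last 0) = f 0 := by congr 1
    have h2 : (Equiv.funUnique (Fin 1) (Fin n)) f = f 0 := by
      simp [Equiv.funUnique]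
    rw [h1, h2]

lemma pw_succ (m : ℕ) (i j : Fin n) :
    pw A (m+1) i j = ∑ k, A i k * pw A m k j := by
  unfold pw
  rw [← (Fin.consEquiv (fun _ : Fin (m+2) => Fin n)).sum_comp]
  rw [Fintype.sum_prod_type]
  have step : ∀ (k : Fin n) (g : Fin (m+1) → Fin n),
      (if (Fin.consEquiv (fun _ : Fin (m+2) => Fin n)) (k, g) 0 = i ∧
          (Fin.consEquiv (fun _ : Fin (m+2) => Fin n)) (k, g) (Fin.last (m+1)) = j
        then wt A (m+1) (ext (m+1) ((Fin.consEquiv (fun _ : Fin (m+2) => Fin n)) (k, g)))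
        else 0)
      = if k = i ∧ g (Fin.last m) = j then A k (g 0) * wt A m (ext m g) else 0 := by
    intro k g
    have hc : (Fin.consEquiv (fun _ : Fin (m+2) => Fin n)) (k, g) = Fin.cons k g := rfl
    rw [hc]
    have h0 : Fin.cons (α := fun _ : Fin (m+2) => Fin n) k g 0 = k := Fin.cons_zero _ _
    have hl : Fin.cons (α := fun _ : Fin (m+2) => Fin n) k g (Fin.last (m+1)) = g (Fin.last m) := by
      rw [← Fin.succ_last, Fin.cons_succ]
    rw [h0, hl, wt_cons]
  rw [Finset.sum_congr rfl (fun k _ => Finset.sum_congr rfl (fun g _ => step k g))]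
  have collapse1 : ∀ k : Fin n,
      (∑ g : Fin (m+1) → Fin n, if k = i ∧ g (Fin.last m) = j then A k (g 0) * wt A m (ext m g) else 0)
      = if k = i then ∑ g : Fin (m+1) → Fin n, (if g (Fin.last m) = j then A k (g 0) * wt A m (ext m g) else 0) else 0 := by
    intro k
    by_cases hk : k = i
    · simp only [hk, true_and, if_true]
    · simp only [hk, false_and, if_false, Finset.sum_const_zero]
  rw [Finset.sum_congr rfl (fun k _ => collapse1 k)]
  rw [Finset.sum_ite_eq' Finset.univ i]
  simp only [Finset.mem_univ, if_true]
  have expand : ∀ k : Fin n,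
      (A i k * ∑ f : Fin (m+1) → Fin n, if f 0 = k ∧ f (Fin.last m) = j then wt A m (ext m f) else 0)
      = ∑ g : Fin (m+1) → Fin n, (if g 0 = k ∧ g (Fin.last m) = j then A i k * wt A m (ext m g) else 0) := by
    intro k
    rw [Finset.mul_sum]
    exact Finset.sum_congr rfl fun g _ => by
      by_cases h : g 0 = k ∧ g (Fin.last m) = j
      · rw [if_pos h, if_pos h]
      · rw [if_neg h, if_neg h, mul_zero]
  rw [Finset.sum_congr rfl (fun k _ => expand k), Finset.sum_comm]
  refine Finset.sum_congr rfl fun g _ => ?_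
  by_cases hj : g (Fin.last m) = j
  · simp only [hj, and_true, if_true]
    rw [Finset.sum_ite_eq Finset.univ (g 0) (fun k => A i k * wt A m (ext m g))]
    simp
  · simp only [hj, and_false, if_false, Finset.sum_const_zero]

/-- Walks of length `m` from `i` to `j`, as `Fin (m+1)`-tuples. -/
def W (m : ℕ) (i j : Fin n) : Finset (Fin (m+1) → Fin n) :=
  Finset.univ.filter (fun f => f 0 = i ∧ f (Fin.last m) = j)

lemma pw_eq_sum_W (m : ℕ) (i j : Fin n) :
    pw A m i j = ∑ f ∈ W m i j, wt A m (ext m f) := by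
  rw [W, Finset.sum_filter, pw]

lemma pow_apply_walks (m : ℕ) (i j : Fin n) :
    (A ^ m) i j = ∑ f ∈ W m i j, wt A m (ext m f) := by
  rw [← pw_eq_sum_W]
  induction m generalizing i with
  | zero => rw [pow_zero, pw_zero]
  | succ m ih =>
    rw [pow_succ', Matrix.mul_apply, pw_succ]
    exact Finset.sum_congr rfl fun k _ => by rw [ih k]

lemma pow_apply_nonneg (hA : ∀ i j, 0 ≤ A i j) (m : ℕ) (i j : Fin n) :
    0 ≤ (A ^ m) i j := by
  rw [pow_apply_walks]
  exact Finset.sum_nonneg fun f _ => wt_nonneg A hA m _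

lemma sIdx_map_eq (v : ℕ → Fin n) : v (sIdx v) = v (tIdx v) := (sIdx_lt_tIdx v).2

lemma shortv_hi {v : ℕ → Fin n} {r : ℕ} (h : sIdx v ≤ r) :
    shortv v r = v (r + gap v) := by
  rcases eq_or_lt_of_le h with h' | h'
  · subst h'
    rw [shortv, if_pos le_rfl]
    have : sIdx v + gap v = tIdx v := by
      have := (sIdx_lt_tIdx v).1; unfold gap; omega
    rw [this]
    exact sIdx_map_eq v
  · rw [shortv, if_neg (by omega)]

lemma longv_hi {v : ℕ → Fin n} {r : ℕ} (h : tIdx v ≤ r) :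
    longv v r = v (r - gap v) := by
  rcases eq_or_lt_of_le h with h' | h'
  · subst h'
    rw [longv, if_pos le_rfl]
    have : tIdx v - gap v = sIdx v := by
      have := (sIdx_lt_tIdx v).1; unfold gap; omega
    rw [this]
    exact (sIdx_map_eq v).symm
  · rw [longv, if_neg (by omega)]

lemma wt_short_mul_long (v : ℕ → Fin n) (N : ℕ) (htN : tIdx v ≤ N) :
    wt A (N - gap v) (shortv v) * wt A (N + gap v) (longv v) = (wt A N v) ^ 2 := by
  set s := sIdx v with hs
  set t := tIdx v with ht
  set ℓ := gap v with hℓ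
  have hst : s < t := (sIdx_lt_tIdx v).1
  have hsℓt : s + ℓ = t := by unfold ℓ; unfold gap; omega
  set F : ℕ → ℝ := fun r => A (v r) (v (r+1)) with hF
  have P1 : wt A (N - ℓ) (shortv v)
      = (∏ r ∈ Finset.range s, F r) * ∏ r ∈ Finset.Ico t N, F r := by
    unfold wt
    rw [Finset.range_eq_Ico, ← Finset.prod_Ico_consecutive _ (Nat.zero_le s) (by omega),
      ← Finset.range_eq_Ico]
    congr 1
    · refine Finset.prod_congr rfl fun r hr => ?_
      rw [Finset.mem_range] at hr
      rw [shortv, if_pos (by omega), shortv, if_pos (by omega)]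
    · have e1 : ∀ r ∈ Finset.Ico s (N - ℓ),
          A (shortv v r) (shortv v (r+1)) = F (r + ℓ) := by
        intro r hr
        rw [Finset.mem_Ico] at hr
        rw [shortv_hi (by omega), shortv_hi (by omega), ← hℓ]
        have : r + 1 + ℓ = r + ℓ + 1 := by omega
        rw [this]
      rw [Finset.prod_congr rfl e1, Finset.prod_Ico_eq_prod_range,
        Finset.prod_Ico_eq_prod_range]
      refine Finset.prod_congr (by rw [show N - ℓ - s = N - t from by omega]) fun k hk => ?_
      rw [show s + k + ℓ = t + k from by omega]
  have P2 : wt A (N + ℓ) (longv v)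
      = (∏ r ∈ Finset.range t, F r) * ∏ r ∈ Finset.Ico s N, F r := by
    unfold wt
    rw [Finset.range_eq_Ico, ← Finset.prod_Ico_consecutive _ (Nat.zero_le t) (by omega),
      ← Finset.range_eq_Ico]
    congr 1
    · refine Finset.prod_congr rfl fun r hr => ?_
      rw [Finset.mem_range] at hr
      rw [longv, if_pos (by omega), longv, if_pos (by omega)]
    · have e1 : ∀ r ∈ Finset.Ico t (N + ℓ),
          A (longv v r) (longv v (r+1)) = F (r - ℓ) := by
        intro r hr
        rw [Finset.mem_Ico] at hr
        rw [longv_hi (by omega), longv_hi (by omega), ← hℓ]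
        have : r + 1 - ℓ = r - ℓ + 1 := by omega
        rw [this]
      rw [Finset.prod_congr rfl e1, Finset.prod_Ico_eq_prod_range,
        Finset.prod_Ico_eq_prod_range]
      refine Finset.prod_congr (by rw [show N + ℓ - t = N - s from by omega]) fun k hk => ?_
      rw [show t + k - ℓ = s + k from by omega]
  have P3 : wt A N v = ((∏ r ∈ Finset.range s, F r) * ∏ r ∈ Finset.Ico s t, F r)
      * ∏ r ∈ Finset.Ico t N, F r := by
    unfold wt
    rw [Finset.range_eq_Ico, ← Finset.prod_Ico_consecutive F (Nat.zero_le s) (by omega : s ≤ N),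
      ← Finset.prod_Ico_consecutive F (by omega : s ≤ t) (by omega : t ≤ N),
      ← Finset.range_eq_Ico, mul_assoc]
  have P4 : ∏ r ∈ Finset.range t, F r
      = (∏ r ∈ Finset.range s, F r) * ∏ r ∈ Finset.Ico s t, F r := by
    rw [Finset.range_eq_Ico, ← Finset.prod_Ico_consecutive F (Nat.zero_le s) (by omega : s ≤ t),
      ← Finset.range_eq_Ico]
  have P5 : ∏ r ∈ Finset.Ico s N, F r
      = (∏ r ∈ Finset.Ico s t, F r) * ∏ r ∈ Finset.Ico t N, F r := by
    rw [Finset.prod_Ico_consecutive F (by omega : s ≤ t) (by omega : t ≤ N)]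
  rw [P1, P2, P3, P4, P5]
  ring

lemma gap_pos (v : ℕ → Fin n) : 1 ≤ gap v := by
  have := (sIdx_lt_tIdx v).1; unfold gap; omega

lemma gap_le (v : ℕ → Fin n) : gap v ≤ n := by
  have h1 := (sIdx_lt_tIdx v).1
  have h2 := tIdx_le v
  unfold gap; omega

lemma sIdx_add_gap (v : ℕ → Fin n) : sIdx v + gap v = tIdx v := by
  have := (sIdx_lt_tIdx v).1; unfold gap; omega

def shortF (ℓ : ℕ) (f : Fin (n+1) → Fin n) : Fin (n-ℓ+1) → Fin n :=
  fun r => shortv (ext n f) r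

def longF (ℓ : ℕ) (f : Fin (n+1) → Fin n) : Fin (n+ℓ+1) → Fin n :=
  fun r => longv (ext n f) r

def cls (i j : Fin n) (ℓ : ℕ) : Finset (Fin (n+1) → Fin n) :=
  (W n i j).filter (fun f => gap (ext n f) = ℓ)

lemma mem_W_iff {m : ℕ} {i j : Fin n} {f : Fin (m+1) → Fin n} :
    f ∈ W m i j ↔ f 0 = i ∧ f (Fin.last m) = j := by
  simp [W]

lemma ext_last {m : ℕ} (f : Fin (m+1) → Fin n) : ext m f m = f (Fin.last m) := by
  rw [ext_eq m f m le_rfl]; rfl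

lemma ext_zero {m : ℕ} (f : Fin (m+1) → Fin n) : ext m f 0 = f 0 := by
  rw [ext_eq m f 0 (Nat.zero_le m)]; rfl

lemma shortF_mem {i j : Fin n} {ℓ : ℕ} (hℓn : ℓ ≤ n) {f : Fin (n+1) → Fin n}
    (hf : f ∈ cls i j ℓ) : shortF ℓ f ∈ W (n-ℓ) i j := by
  rw [cls, Finset.mem_filter] at hf
  obtain ⟨hfW, hgap⟩ := hf
  rw [mem_W_iff] at hfW
  rw [mem_W_iff]
  constructor
  · show shortv (ext n f) ((0 : Fin (n-ℓ+1)) : ℕ) = i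
    have h0 : ((0 : Fin (n-ℓ+1)) : ℕ) = 0 := rfl
    rw [h0, shortv, if_pos (Nat.zero_le _), ext_zero]
    exact hfW.1
  · show shortv (ext n f) ((Fin.last (n-ℓ)) : ℕ) = j
    have h0 : ((Fin.last (n-ℓ)) : ℕ) = n - ℓ := rfl
    have hs : sIdx (ext n f) ≤ n - ℓ := by
      have h1 := sIdx_add_gap (ext n f)
      have h2 := tIdx_le (ext n f)
      omega
    rw [h0, shortv_hi hs, hgap, show n - ℓ + ℓ = n from by omega, ext_last]
    exact hfW.2

lemma longF_mem {i j : Fin n} {ℓ : ℕ} (hℓ1 : 1 ≤ ℓ) {f : Fin (n+1) → Fin n}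
    (hf : f ∈ cls i j ℓ) : longF ℓ f ∈ W (n+ℓ) i j := by
  rw [cls, Finset.mem_filter] at hf
  obtain ⟨hfW, hgap⟩ := hf
  rw [mem_W_iff] at hfW
  rw [mem_W_iff]
  constructor
  · show longv (ext n f) ((0 : Fin (n+ℓ+1)) : ℕ) = i
    have h0 : ((0 : Fin (n+ℓ+1)) : ℕ) = 0 := rfl
    rw [h0, longv, if_pos (Nat.zero_le _), ext_zero]
    exact hfW.1
  · show longv (ext n f) ((Fin.last (n+ℓ)) : ℕ) = j
    have h0 : ((Fin.last (n+ℓ)) : ℕ) = n + ℓ := rfl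
    have ht : tIdx (ext n f) ≤ n + ℓ := le_trans (tIdx_le _) (by omega)
    rw [h0, longv_hi ht, hgap, Nat.add_sub_cancel, ext_last]
    exact hfW.2

lemma longF_injOn {i j : Fin n} {ℓ : ℕ} :
    ∀ f₁ ∈ cls i j ℓ, ∀ f₂ ∈ cls i j ℓ, longF ℓ f₁ = longF ℓ f₂ → f₁ = f₂ := by
  intro f₁ hf₁ f₂ hf₂ heq
  rw [cls, Finset.mem_filter] at hf₁ hf₂
  set v₁ := ext n f₁ with hv₁
  set v₂ := ext n f₂ with hv₂
  have hg₁ : gap v₁ = ℓ := hf₁.2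
  have hg₂ : gap v₂ = ℓ := hf₂.2
  have hagree : ∀ r ≤ n + ℓ, longv v₁ r = longv v₂ r := by
    intro r hr
    have := congrFun heq ⟨r, by omega⟩
    exact this
  have ht₁ : tIdx (longv v₁) = tIdx v₁ := (tIdx_longv v₁).1
  have hs₁ : sIdx (longv v₁) = sIdx v₁ := (tIdx_longv v₁).2
  have ht₂ : tIdx (longv v₂) = tIdx v₂ := (tIdx_longv v₂).1
  have hs₂ : sIdx (longv v₂) = sIdx v₂ := (tIdx_longv v₂).2
  have hcong := tIdx_congr hagree (by rw [ht₁]; exact le_trans (tIdx_le _) (by omega))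
  have htt : tIdx v₂ = tIdx v₁ := by rw [← ht₁, ← ht₂, hcong.1]
  have hveq : ∀ r ≤ n, v₁ r = v₂ r := by
    intro r hr
    by_cases hcase : r ≤ tIdx v₁
    · have e₁ : longv v₁ r = v₁ r := longv_eq_of_le hcase
      have e₂ : longv v₂ r = v₂ r := longv_eq_of_le (htt ▸ hcase)
      rw [← e₁, ← e₂]
      exact hagree r (by omega)
    · push_neg at hcase
      have k₁ : longv v₁ (r + ℓ) = v₁ r := by
        rw [longv_hi (by omega), hg₁, Nat.add_sub_cancel]
      have k₂ : longv v₂ (r + ℓ) = v₂ r := by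
        rw [longv_hi (by omega), hg₂, Nat.add_sub_cancel]
      rw [← k₁, ← k₂]
      exact hagree (r + ℓ) (by omega)
    
  funext x
  have := hveq x.val (by omega)
  rw [hv₁, hv₂, ext_eq n f₁ x.val (by omega), ext_eq n f₂ x.val (by omega)] at this
  simpa using this

lemma card_ne_subtype (c : Fin n) : Fintype.card {x : Fin n // x ≠ c} = n - 1 := by
  have h := Fintype.card_subtype_compl (fun x : Fin n => x = c)
  simpa using h

lemma mu_eq {ℓ : ℕ} (hℓ1 : 1 ≤ ℓ) :
    muBound n ℓ = (n - ℓ + 1) * (n-1).descFactorial (ℓ-1) := by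
  rw [muBound, Nat.descFactorial_eq_prod_range]
  congr 1
  rw [← Finset.Ico_add_one_right_eq_Icc, show ℓ - 1 + 1 = ℓ from by omega,
    Finset.prod_Ico_eq_prod_range]
  refine Finset.prod_congr rfl fun k _ => ?_
  omega

lemma shortF_apply {ℓ : ℕ} (f : Fin (n+1) → Fin n) (r : Fin (n-ℓ+1)) :
    shortF ℓ f r = shortv (ext n f) r := rfl

lemma fiber_facts {i j : Fin n} {ℓ : ℕ} {u : Fin (n-ℓ+1) → Fin n} {s' : ℕ}
    {f : Fin (n+1) → Fin n}
    (hf : f ∈ ((cls i j ℓ).filter (fun f => shortF ℓ f = u)).filter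
      (fun f => sIdx (ext n f) = s')) :
    gap (ext n f) = ℓ ∧ sIdx (ext n f) = s' ∧ tIdx (ext n f) = s' + ℓ ∧
      shortF ℓ f = u ∧ tIdx (ext n f) ≤ n := by
  rw [Finset.mem_filter] at hf
  obtain ⟨hf1, hs⟩ := hf
  rw [Finset.mem_filter] at hf1
  obtain ⟨hfc, hu⟩ := hf1
  rw [cls, Finset.mem_filter] at hfc
  have hgap : gap (ext n f) = ℓ := hfc.2
  have hadd := sIdx_add_gap (ext n f)
  exact ⟨hgap, hs, by omega, hu, tIdx_le _⟩

lemma fiber_low {i j : Fin n} {ℓ : ℕ} {u : Fin (n-ℓ+1) → Fin n} {s' : ℕ}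
    {f : Fin (n+1) → Fin n}
    (hf : f ∈ ((cls i j ℓ).filter (fun f => shortF ℓ f = u)).filter
      (fun f => sIdx (ext n f) = s')) (r : ℕ) (hr : r ≤ s') (hrn : r < n - ℓ + 1) :
    ext n f r = u ⟨r, hrn⟩ := by
  obtain ⟨hgap, hs, ht, hu, htn⟩ := fiber_facts hf
  have h1 := congrFun hu ⟨r, hrn⟩
  rw [← h1, shortF_apply]
  show ext n f r = shortv (ext n f) r
  rw [shortv, if_pos (by omega)]

lemma fiber_high {i j : Fin n} {ℓ : ℕ} {u : Fin (n-ℓ+1) → Fin n} {s' : ℕ}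
    {f : Fin (n+1) → Fin n}
    (hf : f ∈ ((cls i j ℓ).filter (fun f => shortF ℓ f = u)).filter
      (fun f => sIdx (ext n f) = s')) (r : ℕ) (hr1 : s' + ℓ ≤ r) (hr2 : r ≤ n)
    (hrn : r - ℓ < n - ℓ + 1) :
    ext n f r = u ⟨r - ℓ, hrn⟩ := by
  obtain ⟨hgap, hs, ht, hu, htn⟩ := fiber_facts hf
  have h1 := congrFun hu ⟨r - ℓ, hrn⟩
  rw [← h1, shortF_apply]
  show ext n f r = shortv (ext n f) (r - ℓ)
  rw [shortv_hi (by omega), hgap, show r - ℓ + ℓ = r from by omega]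

lemma card_fiber_sIdx_le {i j : Fin n} {ℓ : ℕ} (hℓ1 : 1 ≤ ℓ) (hℓn : ℓ ≤ n)
    (u : Fin (n-ℓ+1) → Fin n) (s' : ℕ) (hs'n : s' < n - ℓ + 1) :
    (((cls i j ℓ).filter (fun f => shortF ℓ f = u)).filter
      (fun f => sIdx (ext n f) = s')).card ≤ (n-1).descFactorial (ℓ-1) := by
  classical
  set c : Fin n := u ⟨s', hs'n⟩ with hc
  set fib := ((cls i j ℓ).filter (fun f => shortF ℓ f = u)).filter
      (fun f => sIdx (ext n f) = s') with hfib
  -- interior values lemma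
  have hvc : ∀ f ∈ fib, ext n f s' = c := by
    intro f hf
    exact fiber_low hf s' le_rfl hs'n
  have hint : ∀ f ∈ fib, ∀ d : ℕ, d < ℓ - 1 →
      ext n f (s' + 1 + d) ≠ c ∧ s' + 1 + d < tIdx (ext n f) := by
    intro f hf d hd
    obtain ⟨hgap, hs, ht, hu, htn⟩ := fiber_facts hf
    have hdt : s' + 1 + d < tIdx (ext n f) := by omega
    constructor
    · intro hcontra
      have hvs : ext n f s' = c := hvc f hf
      have : s' + 1 + d = s' := inj_below' hdt (by omega) (hcontra.trans hvs.symm)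
      omega
    · exact hdt
  -- the injection into embeddings
  set Ψ : (Fin (n+1) → Fin n) → (Fin (ℓ-1) → Fin n) :=
    fun f d => ext n f (s' + 1 + d.val) with hΨ
  -- target finset: injective tuples avoiding c
  set T : Finset (Fin (ℓ-1) → Fin n) :=
    Finset.univ.filter (fun g => Function.Injective g ∧ ∀ d, g d ≠ c) with hT
  have hmaps : ∀ f ∈ fib, Ψ f ∈ T := by
    intro f hf
    obtain ⟨hgap, hs, ht, hu, htn⟩ := fiber_facts hf
    rw [hT, Finset.mem_filter]
    refine ⟨Finset.mem_univ _, ?_, ?_⟩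
    · intro d₁ d₂ hd
      have h₁ := (hint f hf d₁ (by omega)).2
      have h₂ := (hint f hf d₂ (by omega)).2
      have := inj_below' (v := ext n f) h₁ h₂ hd
      ext
      omega
    · intro d
      exact (hint f hf d (by omega)).1
  have hinj : Set.InjOn Ψ (fib : Set (Fin (n+1) → Fin n)) := by
    intro f₁ hf₁c f₂ hf₂c heq
    have hf₁ : f₁ ∈ fib := Finset.mem_coe.mp hf₁c
    have hf₂ : f₂ ∈ fib := Finset.mem_coe.mp hf₂c
    obtain ⟨hgap₁, hs₁, ht₁, hu₁, htn₁⟩ := fiber_facts hf₁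
    obtain ⟨hgap₂, hs₂, ht₂, hu₂, htn₂⟩ := fiber_facts hf₂
    have hveq : ∀ r ≤ n, ext n f₁ r = ext n f₂ r := by
      intro r hr
      rcases le_or_gt r s' with hcase | hcase
      · rw [fiber_low hf₁ r hcase (by omega), fiber_low hf₂ r hcase (by omega)]
      · rcases lt_or_ge r (s' + ℓ) with hcase2 | hcase2
        · -- interior
          have hd : r - s' - 1 < ℓ - 1 := by omega
          have h₁ := congrFun heq ⟨r - s' - 1, hd⟩
          rw [hΨ] at h₁
          simpa [show s' + 1 + (r - s' - 1) = r from by omega] using h₁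
        · rcases eq_or_lt_of_le hcase2 with hcase3 | hcase3
          · -- r = t : v t = v s'
            have k₁ : ext n f₁ r = ext n f₁ s' := by
              have := sIdx_map_eq (ext n f₁)
              rw [hs₁, ht₁, hcase3] at this
              exact this.symm
            have k₂ : ext n f₂ r = ext n f₂ s' := by
              have := sIdx_map_eq (ext n f₂)
              rw [hs₂, ht₂, hcase3] at this
              exact this.symm
            rw [k₁, k₂, fiber_low hf₁ s' le_rfl (by omega),
              fiber_low hf₂ s' le_rfl (by omega)]
          · rw [fiber_high hf₁ r (by omega) hr (by omega),
              fiber_high hf₂ r (by omega) hr (by omega)]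
    funext x
    have := hveq x.val (by omega)
    rw [ext_eq n f₁ x.val (by omega), ext_eq n f₂ x.val (by omega)] at this
    simpa using this
  -- now count
  have h1 : fib.card ≤ T.card := Finset.card_le_card_of_injOn Ψ hmaps hinj
  -- inject T into embeddings
  have hne : Nonempty (Fin (ℓ-1) ↪ {x : Fin n // x ≠ c}) := by
    rw [Function.Embedding.nonempty_iff_card_le, card_ne_subtype, Fintype.card_fin]
    omega
  haveI : Inhabited (Fin (ℓ-1) ↪ {x : Fin n // x ≠ c}) := Classical.inhabited_of_nonempty hne
  have h2 : T.card ≤ Fintype.card (Fin (ℓ-1) ↪ {x : Fin n // x ≠ c}) := by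
    rw [← Finset.card_univ]
    refine Finset.card_le_card_of_injOn
      (fun g => if hg : Function.Injective g ∧ ∀ d, g d ≠ c then
        ⟨fun d => ⟨g d, hg.2 d⟩, fun d₁ d₂ hd => hg.1 (by
          simpa [Subtype.ext_iff] using hd)⟩
        else default) (fun g hg => Finset.mem_univ _) ?_
    · intro g₁ hg₁ g₂ hg₂ hgeq
      have hg₁' : Function.Injective g₁ ∧ ∀ d, g₁ d ≠ c := by
        have := Finset.mem_coe.mp hg₁; rw [hT, Finset.mem_filter] at this
        exact this.2
      have hg₂' : Function.Injective g₂ ∧ ∀ d, g₂ d ≠ c := by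
        have := Finset.mem_coe.mp hg₂; rw [hT, Finset.mem_filter] at this
        exact this.2
      dsimp only at hgeq
      rw [dif_pos hg₁', dif_pos hg₂'] at hgeq
      funext d
      have := congrFun (congrArg (fun (e : Fin (ℓ-1) ↪ {x : Fin n // x ≠ c}) => (e : Fin (ℓ-1) → {x : Fin n // x ≠ c})) hgeq) d
      exact congrArg Subtype.val this
  refine le_trans h1 (le_trans h2 ?_)
  rw [Fintype.card_embedding_eq, card_ne_subtype, Fintype.card_fin]


lemma card_fiber_le {i j : Fin n} {ℓ : ℕ} (hℓ1 : 1 ≤ ℓ) (hℓn : ℓ ≤ n)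
    (u : Fin (n-ℓ+1) → Fin n) :
    ((cls i j ℓ).filter (fun f => shortF ℓ f = u)).card ≤ muBound n ℓ := by
  classical
  have hmaps : ∀ f ∈ (cls i j ℓ).filter (fun f => shortF ℓ f = u),
      sIdx (ext n f) ∈ Finset.range (n - ℓ + 1) := by
    intro f hf
    rw [Finset.mem_filter] at hf
    rw [cls, Finset.mem_filter] at hf
    have hgap : gap (ext n f) = ℓ := hf.1.2
    have h1 := sIdx_add_gap (ext n f)
    have h2 := tIdx_le (ext n f)
    rw [Finset.mem_range]
    omega
  rw [Finset.card_eq_sum_card_fiberwise hmaps]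
  calc ∑ s' ∈ Finset.range (n - ℓ + 1),
        (((cls i j ℓ).filter (fun f => shortF ℓ f = u)).filter
          (fun f => sIdx (ext n f) = s')).card
      ≤ ∑ s' ∈ Finset.range (n - ℓ + 1), (n-1).descFactorial (ℓ-1) := by
        refine Finset.sum_le_sum fun s' hs' => ?_
        exact card_fiber_sIdx_le hℓ1 hℓn u s' (Finset.mem_range.mp hs')
    _ = (n - ℓ + 1) * (n-1).descFactorial (ℓ-1) := by
        rw [Finset.sum_const, Finset.card_range, smul_eq_mul]
    _ = muBound n ℓ := (mu_eq hℓ1).symm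

lemma sum_long_le {i j : Fin n} {ℓ : ℕ} (hA : ∀ i j, 0 ≤ A i j) (hℓ1 : 1 ≤ ℓ) :
    ∑ f ∈ cls i j ℓ, wt A (n+ℓ) (longv (ext n f)) ≤ (A ^ (n+ℓ)) i j := by
  classical
  rw [pow_apply_walks]
  have hcong : ∀ f ∈ cls i j ℓ,
      wt A (n+ℓ) (longv (ext n f)) = wt A (n+ℓ) (ext (n+ℓ) (longF ℓ f)) := by
    intro f _
    refine wt_congr A fun r hr => ?_
    rw [ext_eq (n+ℓ) (longF ℓ f) r (by omega)]
    rfl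
  rw [Finset.sum_congr rfl hcong]
  rw [← Finset.sum_image (g := longF ℓ) (f := fun u => wt A (n+ℓ) (ext (n+ℓ) u)) longF_injOn]
  refine Finset.sum_le_sum_of_subset_of_nonneg ?_ (fun u _ _ => wt_nonneg A hA _ _)
  intro u hu
  rw [Finset.mem_image] at hu
  obtain ⟨f, hf, rfl⟩ := hu
  exact longF_mem hℓ1 hf

lemma sum_short_le {i j : Fin n} {ℓ : ℕ} (hA : ∀ i j, 0 ≤ A i j) (hℓ1 : 1 ≤ ℓ)
    (hℓn : ℓ ≤ n) :
    ∑ f ∈ cls i j ℓ, wt A (n-ℓ) (shortv (ext n f))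
      ≤ (muBound n ℓ : ℝ) * (A ^ (n-ℓ)) i j := by
  classical
  rw [pow_apply_walks]
  have hcong : ∀ f ∈ cls i j ℓ,
      wt A (n-ℓ) (shortv (ext n f)) = wt A (n-ℓ) (ext (n-ℓ) (shortF ℓ f)) := by
    intro f _
    refine wt_congr A fun r hr => ?_
    rw [ext_eq (n-ℓ) (shortF ℓ f) r (by omega)]
    rfl
  rw [Finset.sum_congr rfl hcong]
  have hmaps : ∀ f ∈ cls i j ℓ, shortF ℓ f ∈ W (n-ℓ) i j := fun f hf => shortF_mem hℓn hf
  rw [← Finset.sum_fiberwise_of_maps_to hmaps (fun f => wt A (n-ℓ) (ext (n-ℓ) (shortF ℓ f)))]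
  rw [Finset.mul_sum]
  refine Finset.sum_le_sum fun u hu => ?_
  have hfib : ∀ f ∈ (cls i j ℓ).filter (fun f => shortF ℓ f = u),
      wt A (n-ℓ) (ext (n-ℓ) (shortF ℓ f)) = wt A (n-ℓ) (ext (n-ℓ) u) := by
    intro f hf
    rw [(Finset.mem_filter.mp hf).2]
  rw [Finset.sum_congr rfl hfib, Finset.sum_const, nsmul_eq_mul]
  have h1 : (((cls i j ℓ).filter (fun f => shortF ℓ f = u)).card : ℝ) ≤ (muBound n ℓ : ℝ) := by
    exact_mod_cast card_fiber_le hℓ1 hℓn u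
  exact mul_le_mul_of_nonneg_right h1 (wt_nonneg A hA _ _)

lemma pow_partition (i j : Fin n) :
    (A ^ n) i j = ∑ ℓ ∈ Finset.Icc 1 n, ∑ f ∈ cls i j ℓ, wt A n (ext n f) := by
  classical
  rw [pow_apply_walks]
  have hmaps : ∀ f ∈ W n i j, gap (ext n f) ∈ Finset.Icc 1 n := by
    intro f _
    rw [Finset.mem_Icc]
    exact ⟨gap_pos _, gap_le _⟩
  exact (Finset.sum_fiberwise_of_maps_to hmaps (fun f => wt A n (ext n f))).symm

lemma cls_sum_le {i j : Fin n} {ℓ : ℕ} (hA : ∀ i j, 0 ≤ A i j) (hℓ1 : 1 ≤ ℓ)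
    (hℓn : ℓ ≤ n) {a : ℝ} (ha0 : 0 ≤ a) (ha2 : a * Real.sqrt (muBound n ℓ) ≤ 2) :
    a * ∑ f ∈ cls i j ℓ, wt A n (ext n f)
      ≤ (A ^ (n-ℓ)) i j + (A ^ (n+ℓ)) i j := by
  classical
  set X := (A ^ (n-ℓ)) i j with hX
  set Y := (A ^ (n+ℓ)) i j with hY
  have hX0 : 0 ≤ X := pow_apply_nonneg A hA _ i j
  have hY0 : 0 ≤ Y := pow_apply_nonneg A hA _ i j
  set S := ∑ f ∈ cls i j ℓ, wt A n (ext n f) with hS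
  -- rewrite each term as product of square roots
  have hterm : ∀ f ∈ cls i j ℓ, wt A n (ext n f)
      = Real.sqrt (wt A (n-ℓ) (shortv (ext n f))) * Real.sqrt (wt A (n+ℓ) (longv (ext n f))) := by
    intro f hf
    have hgap : gap (ext n f) = ℓ := (Finset.mem_filter.mp hf).2
    have hkey := wt_short_mul_long A (ext n f) n (tIdx_le _)
    rw [hgap] at hkey
    rw [← Real.sqrt_mul (wt_nonneg A hA _ _), hkey,
      Real.sqrt_sq (wt_nonneg A hA _ _)]
  have hCS : S ^ 2 ≤ (∑ f ∈ cls i j ℓ, wt A (n-ℓ) (shortv (ext n f)))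
      * (∑ f ∈ cls i j ℓ, wt A (n+ℓ) (longv (ext n f))) := by
    rw [hS, Finset.sum_congr rfl hterm]
    have := Finset.sum_mul_sq_le_sq_mul_sq (cls i j ℓ)
      (fun f => Real.sqrt (wt A (n-ℓ) (shortv (ext n f))))
      (fun f => Real.sqrt (wt A (n+ℓ) (longv (ext n f))))
    refine le_trans this (le_of_eq ?_)
    congr 1
    · exact Finset.sum_congr rfl fun f _ => Real.sq_sqrt (wt_nonneg A hA _ _)
    · exact Finset.sum_congr rfl fun f _ => Real.sq_sqrt (wt_nonneg A hA _ _)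
  have hS0 : 0 ≤ S := by
    rw [hS, Finset.sum_congr rfl hterm]
    exact Finset.sum_nonneg fun f _ => mul_nonneg (Real.sqrt_nonneg _) (Real.sqrt_nonneg _)
  have hlong0 : 0 ≤ ∑ f ∈ cls i j ℓ, wt A (n+ℓ) (longv (ext n f)) :=
    Finset.sum_nonneg fun f _ => wt_nonneg A hA _ _
  have hshort0 : 0 ≤ ∑ f ∈ cls i j ℓ, wt A (n-ℓ) (shortv (ext n f)) :=
    Finset.sum_nonneg fun f _ => wt_nonneg A hA _ _
  have hS2 : S ^ 2 ≤ (muBound n ℓ : ℝ) * X * Y := by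
    refine le_trans hCS ?_
    refine mul_le_mul (sum_short_le A hA hℓ1 hℓn) (sum_long_le A hA hℓ1) hlong0 ?_
    positivity
  have hmu0 : (0:ℝ) ≤ (muBound n ℓ : ℝ) := Nat.cast_nonneg _
  have ha2' : a ^ 2 * (muBound n ℓ : ℝ) ≤ 4 := by
    have h := mul_le_mul ha2 ha2 (by positivity) (by norm_num)
    calc a ^ 2 * (muBound n ℓ : ℝ)
        = (a * Real.sqrt (muBound n ℓ)) * (a * Real.sqrt (muBound n ℓ)) := by
          rw [show (a * Real.sqrt (muBound n ℓ)) * (a * Real.sqrt (muBound n ℓ))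
            = a ^ 2 * (Real.sqrt (muBound n ℓ) ^ 2) from by ring, Real.sq_sqrt hmu0]
      _ ≤ 2 * 2 := h
      _ = 4 := by norm_num
  have haS2 : (a * S) ^ 2 ≤ 4 * (X * Y) := by
    calc (a * S) ^ 2 = a ^ 2 * S ^ 2 := by ring
      _ ≤ a ^ 2 * ((muBound n ℓ : ℝ) * X * Y) := by
          refine mul_le_mul_of_nonneg_left hS2 (by positivity)
      _ = (a ^ 2 * (muBound n ℓ : ℝ)) * (X * Y) := by ring
      _ ≤ 4 * (X * Y) := mul_le_mul_of_nonneg_right ha2' (by positivity)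
  have haS : a * S ≤ 2 * Real.sqrt X * Real.sqrt Y := by
    have h1 : a * S = Real.sqrt ((a * S) ^ 2) := (Real.sqrt_sq (by positivity)).symm
    rw [h1]
    refine le_trans (Real.sqrt_le_sqrt haS2) (le_of_eq ?_)
    rw [show (4 : ℝ) * (X * Y) = 2^2 * (X * Y) from by norm_num,
      Real.sqrt_mul (by positivity), Real.sqrt_sq (by norm_num),
      Real.sqrt_mul hX0, mul_assoc]
  refine le_trans haS ?_
  have := two_mul_le_add_sq (Real.sqrt X) (Real.sqrt Y)
  rw [Real.sq_sqrt hX0, Real.sq_sqrt hY0] at this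
  exact this

lemma main_entry (hA : ∀ i j, 0 ≤ A i j) (i j : Fin n) {a : ℝ} (ha0 : 0 ≤ a)
    (ha' : ∀ ℓ, 1 ≤ ℓ → ℓ ≤ n → a * Real.sqrt (muBound n ℓ) ≤ 2) :
    a * (A ^ n) i j ≤ ∑ m ∈ Finset.range n, (A ^ m) i j
      + ∑ m ∈ Finset.Icc (n+1) (2*n), (A ^ m) i j := by
  classical
  rw [pow_partition, Finset.mul_sum]
  have step : ∑ ℓ ∈ Finset.Icc 1 n, a * ∑ f ∈ cls i j ℓ, wt A n (ext n f)
      ≤ ∑ ℓ ∈ Finset.Icc 1 n, ((A ^ (n-ℓ)) i j + (A ^ (n+ℓ)) i j) := by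
    refine Finset.sum_le_sum fun ℓ hℓ => ?_
    rw [Finset.mem_Icc] at hℓ
    exact cls_sum_le A hA hℓ.1 hℓ.2 ha0 (ha' ℓ hℓ.1 hℓ.2)
  refine le_trans step ?_
  rw [Finset.sum_add_distrib]
  have e1 : ∑ ℓ ∈ Finset.Icc 1 n, (A ^ (n-ℓ)) i j = ∑ m ∈ Finset.range n, (A ^ m) i j := by
    refine Finset.sum_nbij' (fun ℓ => n - ℓ) (fun m => n - m) ?_ ?_ ?_ ?_ ?_
    · intro ℓ hℓ; rw [Finset.mem_Icc] at hℓ; rw [Finset.mem_range]; omega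
    · intro m hm; rw [Finset.mem_range] at hm; rw [Finset.mem_Icc]; omega
    · intro ℓ hℓ; rw [Finset.mem_Icc] at hℓ; omega
    · intro m hm; rw [Finset.mem_range] at hm; omega
    · intro ℓ _; rfl
  have e2 : ∑ ℓ ∈ Finset.Icc 1 n, (A ^ (n+ℓ)) i j
      = ∑ m ∈ Finset.Icc (n+1) (2*n), (A ^ m) i j := by
    refine Finset.sum_nbij' (fun ℓ => n + ℓ) (fun m => m - n) ?_ ?_ ?_ ?_ ?_
    · intro ℓ hℓ; rw [Finset.mem_Icc] at hℓ; rw [Finset.mem_Icc]; omega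
    · intro m hm; rw [Finset.mem_Icc] at hm; rw [Finset.mem_Icc]; omega
    · intro ℓ hℓ; rw [Finset.mem_Icc] at hℓ; omega
    · intro m hm; rw [Finset.mem_Icc] at hm; omega
    · intro ℓ _; rfl
  rw [e1, e2]

end PPaux

theorem pPoly_mem_polyPreservesNonneg (n : ℕ) (hn : 2 ≤ n) (a : ℝ) (ha0 : 0 < a)
    (ha : ∀ k, 1 ≤ k → k ≤ n - 1 → a ≤ 2 / Real.sqrt (muBound n k)) :
    pPoly n a ∈ polyPreservesNonneg n := by
  classical
  intro A hA i j
  -- positivity of muBound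
  have hmu_pos : ∀ ℓ, 1 ≤ ℓ → ℓ ≤ n → 0 < muBound n ℓ := by
    intro ℓ h1 h2
    rw [muBound]
    refine Nat.mul_pos (by omega) (Finset.prod_pos ?_)
    intro x hx
    rw [Finset.mem_Icc] at hx
    omega
  have hlast : muBound n n ≤ muBound n (n-1) := by
    rw [muBound, muBound]
    have h1 : n - n + 1 = 1 := by omega
    have h2 : n - (n-1) + 1 = 2 := by omega
    have h3 : Finset.Icc 1 (n-1) = Finset.Icc 1 ((n-2)+1) := by congr 1; omega
    have h5 : n - 1 - 1 = n - 2 := by omega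
    rw [h1, h2, one_mul, h3, Finset.prod_Icc_succ_top (by omega), h5]
    have h4 : n - ((n-2)+1) = 1 := by omega
    rw [h4, mul_one]
    omega
  have ha' : ∀ ℓ, 1 ≤ ℓ → ℓ ≤ n → a * Real.sqrt (muBound n ℓ) ≤ 2 := by
    intro ℓ h1 h2
    rcases lt_or_eq_of_le h2 with hlt | heq
    · have hb := ha ℓ h1 (by omega)
      have hpos : (0:ℝ) < Real.sqrt (muBound n ℓ) :=
        Real.sqrt_pos.mpr (by exact_mod_cast hmu_pos ℓ h1 h2)
      rw [le_div_iff₀ hpos] at hb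
      exact hb
    · subst heq
      have hb := ha (ℓ-1) (by omega) (by omega)
      have hpos : (0:ℝ) < Real.sqrt (muBound ℓ (ℓ-1)) :=
        Real.sqrt_pos.mpr (by exact_mod_cast hmu_pos (ℓ-1) (by omega) (by omega))
      rw [le_div_iff₀ hpos] at hb
      have hmono : Real.sqrt (muBound ℓ ℓ) ≤ Real.sqrt (muBound ℓ (ℓ-1)) :=
        Real.sqrt_le_sqrt (by exact_mod_cast hlast)
      calc a * Real.sqrt (muBound ℓ ℓ) ≤ a * Real.sqrt (muBound ℓ (ℓ-1)) :=
            mul_le_mul_of_nonneg_left hmono ha0.le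
        _ ≤ 2 := hb
  -- entry formula for the evaluated polynomial
  have hev : (Polynomial.aeval A) (pPoly n a) i j
      = ∑ m ∈ Finset.range (2*n+1), (if m = n then -a else 1) * (A ^ m) i j := by
    rw [pPoly, map_sum, Matrix.sum_apply]
    refine Finset.sum_congr rfl fun m _ => ?_
    rw [map_mul, Polynomial.aeval_C, Polynomial.aeval_X_pow,
      Algebra.algebraMap_eq_smul_one, smul_mul_assoc, one_mul,
      Matrix.smul_apply, smul_eq_mul]
  have hnmem : n ∈ Finset.range (2*n+1) := by rw [Finset.mem_range]; omega
  rw [hev, Finset.sum_eq_sum_sdiff_singleton_add hnmem]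
  have hcoeff : ∀ m ∈ Finset.range (2*n+1) \ {n},
      (if m = n then -a else 1) * (A ^ m) i j = (A ^ m) i j := by
    intro m hm
    rw [Finset.mem_sdiff, Finset.mem_singleton] at hm
    rw [if_neg hm.2, one_mul]
  rw [Finset.sum_congr rfl hcoeff, if_pos rfl]
  have hsplit : Finset.range (2*n+1) \ {n}
      = Finset.range n ∪ Finset.Icc (n+1) (2*n) := by
    ext m
    simp only [Finset.mem_sdiff, Finset.mem_singleton, Finset.mem_range,
      Finset.mem_union, Finset.mem_Icc]
    omega
  have hdisj : Disjoint (Finset.range n) (Finset.Icc (n+1) (2*n)) := by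
    rw [Finset.disjoint_left]
    intro m hm1 hm2
    rw [Finset.mem_range] at hm1
    rw [Finset.mem_Icc] at hm2
    omega
  rw [hsplit, Finset.sum_union hdisj]
  have hmain := PPaux.main_entry A hA i j ha0.le ha'
  linarith
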